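/- arXiv:2107.03490 — 3 statements merged into one kernel-verified Lean document; each statement's English description precedes it below -/
import Mathlib

section
/- Let X be a finite-dimensional real Banach space and T, A nonzero operators. If 0 ∈ conv{ x*(Tx) · x*(Ax) : (x, x*) ∈ M_{W(T)} }, then there exist t₁, t₂, t₃ ∈ [0,1] with t₁+t₂+t₃=1 and pairs (x_j, x_j*) ∈ M_{W(T)} such that the functional ρ(B) = (1/‖T‖_w) Σ_j t_j x_j*(Tx_j) x_j*(Bx_j) satisfies ρ(T) = ‖T‖_w, |ρ(B)| ≤ ‖B‖_w for all B, and ρ(A) = 0; hence T ⊥_B^w A. -/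
/-- The numerical radius of a bounded linear operator on a real space. -/
noncomputable def nrad {X : Type*} [NormedAddCommGroup X] [NormedSpace ℝ X]
    (T : X →L[ℝ] X) : ℝ :=
  sSup {r : ℝ | ∃ (x : X) (f : X →L[ℝ] ℝ), ‖x‖ = 1 ∧ ‖f‖ = 1 ∧ f x = 1 ∧ r = ‖f (T x)‖}

/-- The numerical radius attainment set of `T`. -/
noncomputable def MW {X : Type*} [NormedAddCommGroup X] [NormedSpace ℝ X]
    (T : X →L[ℝ] X) : Set (X × (X →L[ℝ] ℝ)) :=
  {p | ‖p.1‖ = 1 ∧ ‖p.2‖ = 1 ∧ p.2 p.1 = 1 ∧ |p.2 (T p.1)| = nrad T}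

lemma nrad_bddAbove {X : Type*} [NormedAddCommGroup X] [NormedSpace ℝ X]
    (B : X →L[ℝ] X) :
    BddAbove {r : ℝ | ∃ (x : X) (f : X →L[ℝ] ℝ), ‖x‖ = 1 ∧ ‖f‖ = 1 ∧ f x = 1 ∧ r = ‖f (B x)‖} := by
  refine ⟨‖B‖, ?_⟩
  rintro r ⟨x, f, hx, hf, -, rfl⟩
  calc ‖f (B x)‖ ≤ ‖f‖ * ‖B x‖ := f.le_opNorm _
    _ ≤ ‖f‖ * (‖B‖ * ‖x‖) := by gcongr; exact B.le_opNorm x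
    _ = ‖B‖ := by rw [hx, hf]; ring

lemma exists_pair {X : Type*} [NormedAddCommGroup X] [NormedSpace ℝ X] [Nontrivial X] :
    ∃ (x : X) (f : X →L[ℝ] ℝ), ‖x‖ = 1 ∧ ‖f‖ = 1 ∧ f x = 1 := by
  obtain ⟨x, hx⟩ := exists_ne (0 : X)
  have hxn : ‖x‖ ≠ 0 := norm_ne_zero_iff.mpr hx
  set y := ‖x‖⁻¹ • x with hy'
  have hy : ‖y‖ = 1 := by
    rw [hy', norm_smul, norm_inv, norm_norm, inv_mul_cancel₀ hxn]
  have hy0 : y ≠ 0 := by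
    intro h0; rw [h0, norm_zero] at hy; norm_num at hy
  obtain ⟨f, hf, hfy⟩ := exists_dual_vector ℝ y (norm_ne_zero_iff.mpr hy0)
  exact ⟨y, f, hy, hf, by rw [hfy, hy]; norm_num⟩

lemma apply_le_nrad {X : Type*} [NormedAddCommGroup X] [NormedSpace ℝ X]
    (B : X →L[ℝ] X) (x : X) (f : X →L[ℝ] ℝ)
    (hx : ‖x‖ = 1) (hf : ‖f‖ = 1) (hfx : f x = 1) : |f (B x)| ≤ nrad B := by
  have := le_csSup (nrad_bddAbove B) (show ‖f (B x)‖ ∈ _ from ⟨x, f, hx, hf, hfx, rfl⟩)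
  rwa [Real.norm_eq_abs] at this

lemma nrad_nonneg {X : Type*} [NormedAddCommGroup X] [NormedSpace ℝ X] [Nontrivial X]
    (B : X →L[ℝ] X) : 0 ≤ nrad B := by
  obtain ⟨x, f, hx, hf, hfx⟩ := exists_pair (X := X)
  exact le_trans (abs_nonneg _) (apply_le_nrad B x f hx hf hfx)

lemma main_aux {X : Type*} [NormedAddCommGroup X] [NormedSpace ℝ X] [Nontrivial X]
    (T A : X →L[ℝ] X) (t : Fin 3 → ℝ) (q : Fin 3 → X × (X →L[ℝ] ℝ))
    (ht0 : ∀ j, 0 ≤ t j) (ht1 : ∑ j, t j = 1) (hq : ∀ j, q j ∈ MW T)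
    (hzero : ∑ j, t j * (q j).2 (T (q j).1) * (q j).2 (A (q j).1) = 0) :
    (∃ (t : Fin 3 → ℝ) (q : Fin 3 → X × (X →L[ℝ] ℝ)),
      (∀ j, 0 ≤ t j ∧ t j ≤ 1) ∧ (∑ j, t j = 1) ∧ (∀ j, q j ∈ MW T) ∧
      (1 / nrad T) * (∑ j, t j * (q j).2 (T (q j).1) * (q j).2 (T (q j).1)) = nrad T ∧
      (∀ B : X →L[ℝ] X,
        |(1 / nrad T) * (∑ j, t j * (q j).2 (T (q j).1) * (q j).2 (B (q j).1))| ≤ nrad B) ∧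
      (1 / nrad T) * (∑ j, t j * (q j).2 (T (q j).1) * (q j).2 (A (q j).1)) = 0) ∧
    (∀ lam : ℝ, nrad T ≤ nrad (T + lam • A)) := by
  have ht01 : ∀ j, 0 ≤ t j ∧ t j ≤ 1 := by
    intro j
    refine ⟨ht0 j, ?_⟩
    calc t j ≤ ∑ i, t i := Finset.single_le_sum (fun i _ => ht0 i) (Finset.mem_univ j)
      _ = 1 := ht1
  have hcabs : ∀ j, |(q j).2 (T (q j).1)| = nrad T := fun j => (hq j).2.2.2
  have hcsq : ∀ j, (q j).2 (T (q j).1) * (q j).2 (T (q j).1) = nrad T ^ 2 := by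
    intro j
    rw [← abs_mul_abs_self, hcabs j, sq]
  -- ρ(T) = nrad T
  have hρT : (1 / nrad T) * (∑ j, t j * (q j).2 (T (q j).1) * (q j).2 (T (q j).1)) = nrad T := by
    have hsum : ∑ j, t j * (q j).2 (T (q j).1) * (q j).2 (T (q j).1) = nrad T ^ 2 := by
      calc ∑ j, t j * (q j).2 (T (q j).1) * (q j).2 (T (q j).1)
          = ∑ j, t j * (nrad T ^ 2) := by
            apply Finset.sum_congr rfl
            intro j _
            rw [mul_assoc, hcsq j]
        _ = (∑ j, t j) * nrad T ^ 2 := by rw [← Finset.sum_mul]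
        _ = nrad T ^ 2 := by rw [ht1, one_mul]
    rw [hsum]
    rcases eq_or_ne (nrad T) 0 with h0 | h0
    · simp [h0]
    · rw [pow_two, one_div, inv_mul_cancel_left₀ h0]
  -- |ρ(B)| ≤ nrad B
  have hρB : ∀ B : X →L[ℝ] X,
      |(1 / nrad T) * (∑ j, t j * (q j).2 (T (q j).1) * (q j).2 (B (q j).1))| ≤ nrad B := by
    intro B
    have hnB : 0 ≤ nrad B := nrad_nonneg B
    rcases eq_or_ne (nrad T) 0 with h0 | h0
    · have hc0 : ∀ j, (q j).2 (T (q j).1) = 0 := by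
        intro j
        have := hcabs j
        rw [h0, abs_eq_zero] at this
        exact this
      simp [hc0, h0, hnB]
    · have hnT : 0 < nrad T := lt_of_le_of_ne (nrad_nonneg T) (Ne.symm h0)
      have hterm : ∀ j, |t j * (q j).2 (T (q j).1) * (q j).2 (B (q j).1)|
          ≤ t j * nrad T * nrad B := by
        intro j
        rw [abs_mul, abs_mul, abs_of_nonneg (ht0 j), hcabs j]
        exact mul_le_mul_of_nonneg_left
          (apply_le_nrad B (q j).1 (q j).2 (hq j).1 (hq j).2.1 (hq j).2.2.1)
          (mul_nonneg (ht0 j) hnT.le)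
      have habs : |∑ j, t j * (q j).2 (T (q j).1) * (q j).2 (B (q j).1)|
          ≤ nrad T * nrad B := by
        calc |∑ j, t j * (q j).2 (T (q j).1) * (q j).2 (B (q j).1)|
            ≤ ∑ j, |t j * (q j).2 (T (q j).1) * (q j).2 (B (q j).1)| :=
              Finset.abs_sum_le_sum_abs _ _
          _ ≤ ∑ j, t j * nrad T * nrad B := Finset.sum_le_sum fun j _ => hterm j
          _ = (∑ j, t j) * (nrad T * nrad B) := by
              rw [← Finset.sum_mul, ← Finset.sum_mul, mul_assoc]
          _ = nrad T * nrad B := by rw [ht1, one_mul]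
      rw [abs_mul, abs_of_nonneg (by positivity : (0:ℝ) ≤ 1 / nrad T)]
      calc (1 / nrad T) * |∑ j, t j * (q j).2 (T (q j).1) * (q j).2 (B (q j).1)|
          ≤ (1 / nrad T) * (nrad T * nrad B) := by gcongr
        _ = nrad B := by field_simp
  -- ρ(A) = 0
  have hρA : (1 / nrad T) * (∑ j, t j * (q j).2 (T (q j).1) * (q j).2 (A (q j).1)) = 0 := by
    rw [hzero, mul_zero]
  refine ⟨⟨t, q, ht01, ht1, hq, hρT, hρB, hρA⟩, ?_⟩
  intro lam
  have hsum : ∑ j, t j * (q j).2 (T (q j).1) * (q j).2 ((T + lam • A) (q j).1)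
      = (∑ j, t j * (q j).2 (T (q j).1) * (q j).2 (T (q j).1))
        + lam * ∑ j, t j * (q j).2 (T (q j).1) * (q j).2 (A (q j).1) := by
    rw [Finset.mul_sum, ← Finset.sum_add_distrib]
    apply Finset.sum_congr rfl
    intro j _
    simp only [ContinuousLinearMap.add_apply, ContinuousLinearMap.coe_smul',
      Pi.smul_apply, map_add, map_smul, smul_eq_mul]
    ring
  have hval : (1 / nrad T) * (∑ j, t j * (q j).2 (T (q j).1) * (q j).2 ((T + lam • A) (q j).1))
      = nrad T := by
    rw [hsum, mul_add, hρT, hzero, mul_zero, mul_zero, add_zero]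
  calc nrad T = (1 / nrad T)
      * (∑ j, t j * (q j).2 (T (q j).1) * (q j).2 ((T + lam • A) (q j).1)) := hval.symm
    _ ≤ |(1 / nrad T)
      * (∑ j, t j * (q j).2 (T (q j).1) * (q j).2 ((T + lam • A) (q j).1))| := le_abs_self _
    _ ≤ nrad (T + lam • A) := hρB _

/-- if `0` lies in the convex hull of `{x*(Tx)·x*(Ax) : (x,x*) ∈ M_{W(T)}}`
then there exist `t₁, t₂, t₃ ∈ [0,1]` summing to `1` and pairs `(x_j, x_j*) ∈ M_{W(T)}`
such that `ρ(B) = (1/‖T‖_w) Σ_j t_j x_j*(Tx_j) x_j*(Bx_j)` satisfies `ρ(T) = ‖T‖_w`,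
`|ρ(B)| ≤ ‖B‖_w` for all `B`, and `ρ(A) = 0`; hence `T ⊥_B^w A`. -/
theorem support_functional_from_convex_hull (X : Type*) [NormedAddCommGroup X]
    [NormedSpace ℝ X] [FiniteDimensional ℝ X]
    (T A : X →L[ℝ] X) (hT : T ≠ 0) (hA : A ≠ 0)
    (h : (0 : ℝ) ∈ convexHull ℝ {d : ℝ | ∃ p ∈ MW T, d = p.2 (T p.1) * p.2 (A p.1)}) :
    (∃ (t : Fin 3 → ℝ) (q : Fin 3 → X × (X →L[ℝ] ℝ)),
      (∀ j, 0 ≤ t j ∧ t j ≤ 1) ∧ (∑ j, t j = 1) ∧ (∀ j, q j ∈ MW T) ∧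
      (1 / nrad T) * (∑ j, t j * (q j).2 (T (q j).1) * (q j).2 (T (q j).1)) = nrad T ∧
      (∀ B : X →L[ℝ] X,
        |(1 / nrad T) * (∑ j, t j * (q j).2 (T (q j).1) * (q j).2 (B (q j).1))| ≤ nrad B) ∧
      (1 / nrad T) * (∑ j, t j * (q j).2 (T (q j).1) * (q j).2 (A (q j).1)) = 0) ∧
    (∀ lam : ℝ, nrad T ≤ nrad (T + lam • A)) := by
  have hXnt : Nontrivial X := by
    rcases subsingleton_or_nontrivial X with hs | hn
    · exact absurd (by ext x; exact Subsingleton.elim _ _) hT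
    · exact hn
  rw [convexHull_eq] at h
  obtain ⟨ι, s, w, z, hw0, hw1, hzs, hcm⟩ := h
  rw [Finset.centerMass_eq_of_sum_1 _ _ hw1] at hcm
  simp only [smul_eq_mul] at hcm
  have hneg : ∃ i ∈ s, 0 < w i ∧ z i ≤ 0 := by
    by_contra hc
    push_neg at hc
    have hterm : ∀ i ∈ s, 0 ≤ w i * z i := by
      intro i hi
      rcases (hw0 i hi).lt_or_eq with hw | hw
      · exact le_of_lt (mul_pos hw (hc i hi hw))
      · simp [← hw]
    have hall := (Finset.sum_eq_zero_iff_of_nonneg hterm).mp hcm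
    obtain ⟨i, hi, hwi⟩ : ∃ i ∈ s, w i ≠ 0 := by
      by_contra hc2
      push_neg at hc2
      rw [Finset.sum_eq_zero hc2] at hw1
      norm_num at hw1
    have hwp : 0 < w i := lt_of_le_of_ne (hw0 i hi) (Ne.symm hwi)
    have := hall i hi
    nlinarith [hc i hi hwp]
  have hpos : ∃ i ∈ s, 0 < w i ∧ 0 ≤ z i := by
    by_contra hc
    push_neg at hc
    have hterm : ∀ i ∈ s, w i * z i ≤ 0 := by
      intro i hi
      rcases (hw0 i hi).lt_or_eq with hw | hw
      · exact le_of_lt (mul_neg_of_pos_of_neg hw (hc i hi hw))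
      · simp [← hw]
    have hall := (Finset.sum_eq_zero_iff_of_nonpos hterm).mp hcm
    obtain ⟨i, hi, hwi⟩ : ∃ i ∈ s, w i ≠ 0 := by
      by_contra hc2
      push_neg at hc2
      rw [Finset.sum_eq_zero hc2] at hw1
      norm_num at hw1
    have hwp : 0 < w i := lt_of_le_of_ne (hw0 i hi) (Ne.symm hwi)
    have := hall i hi
    nlinarith [hc i hi hwp]
  obtain ⟨i₁, hi₁, hw₁, hz₁⟩ := hneg
  obtain ⟨i₂, hi₂, hw₂, hz₂⟩ := hpos
  obtain ⟨p₁, hp₁, hzp₁⟩ := hzs i₁ hi₁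
  obtain ⟨p₂, hp₂, hzp₂⟩ := hzs i₂ hi₂
  set a := z i₁
  set b := z i₂
  have ha' : p₁.2 (T p₁.1) * p₁.2 (A p₁.1) = a := hzp₁.symm
  have hb' : p₂.2 (T p₂.1) * p₂.2 (A p₂.1) = b := hzp₂.symm
  rcases lt_or_ge a b with hab | hab
  · -- a < b, genuine combination
    have hd : (0:ℝ) < b - a := by linarith
    refine main_aux T A ![b / (b - a), -a / (b - a), 0] ![p₁, p₂, p₁] ?_ ?_ ?_ ?_
    · intro j
      fin_cases j <;>
        simp only [Matrix.cons_val_zero, Matrix.cons_val_one, Matrix.head_cons,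
          Matrix.cons_val_two, Matrix.tail_cons]
      · exact div_nonneg (by linarith) hd.le
      · exact div_nonneg (by linarith) hd.le
      · norm_num
    · simp only [Fin.sum_univ_three, Matrix.cons_val_zero, Matrix.cons_val_one,
        Matrix.head_cons, Matrix.cons_val_two, Matrix.tail_cons]
      field_simp
      ring
    · intro j
      fin_cases j
      · simpa using hp₁
      · simpa using hp₂
      · simpa using hp₁
    · simp only [Fin.sum_univ_three, Matrix.cons_val_zero, Matrix.cons_val_one,
        Matrix.head_cons, Matrix.cons_val_two, Matrix.tail_cons, mul_assoc, ha', hb',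
        zero_mul, add_zero]
      field_simp
      ring
  · -- then a = b = 0
    have ha0 : a = 0 := le_antisymm hz₁ (le_trans hz₂ hab)
    refine main_aux T A ![1, 0, 0] ![p₁, p₁, p₁] ?_ ?_ ?_ ?_
    · intro j; fin_cases j <;> norm_num
    · simp [Fin.sum_univ_three]
    · intro j
      fin_cases j
      · simpa using hp₁
      · simpa using hp₁
      · simpa using hp₁
    · simp only [Fin.sum_univ_three, Matrix.cons_val_zero, Matrix.cons_val_one,
        Matrix.head_cons, Matrix.cons_val_two, Matrix.tail_cons, mul_assoc, ha',
        zero_mul, add_zero, one_mul, ha0]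
end

section
/- Let X be a finite-dimensional real Banach space and T a nonzero operator. Then T is nu-smooth if and only if M_{W(T)} = { (x₀, x₀*), (−x₀, −x₀*) } for some fixed pair (x₀, x₀*) with x₀*(x₀) = 1 = ‖x₀‖ = ‖x₀*‖. -/
set_option linter.unusedSectionVars false
set_option maxHeartbeats 1000000

namespace NuSmoothAux

variable {X : Type*} [NormedAddCommGroup X] [NormedSpace ℝ X]

/-- The set of norming pairs. -/
def Om (X : Type*) [NormedAddCommGroup X] [NormedSpace ℝ X] : Set (X × (X →L[ℝ] ℝ)) :=
  {p | ‖p.1‖ = 1 ∧ ‖p.2‖ = 1 ∧ p.2 p.1 = 1}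

lemma nrad_eq (S : X →L[ℝ] X) :
    nrad S = sSup ((fun p : X × (X →L[ℝ] ℝ) => |p.2 (S p.1)|) '' Om X) := by
  unfold nrad Om
  congr 1
  ext r
  constructor
  · rintro ⟨x, f, h1, h2, h3, rfl⟩
    exact ⟨(x, f), ⟨h1, h2, h3⟩, (Real.norm_eq_abs _).symm⟩
  · rintro ⟨⟨x, f⟩, ⟨h1, h2, h3⟩, rfl⟩
    exact ⟨x, f, h1, h2, h3, (Real.norm_eq_abs _).symm⟩

lemma continuous_val (S : X →L[ℝ] X) :
    Continuous fun p : X × (X →L[ℝ] ℝ) => p.2 (S p.1) :=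
  isBoundedBilinearMap_apply.continuous.comp
    (continuous_snd.prodMk (S.continuous.comp continuous_fst))

lemma val_le_norm (A : X →L[ℝ] X) {p : X × (X →L[ℝ] ℝ)} (hp : p ∈ Om X) :
    |p.2 (A p.1)| ≤ ‖A‖ := by
  calc |p.2 (A p.1)| ≤ ‖p.2‖ * ‖A p.1‖ := p.2.le_opNorm _
    _ ≤ ‖p.2‖ * (‖A‖ * ‖p.1‖) :=
        mul_le_mul_of_nonneg_left (A.le_opNorm _) (norm_nonneg _)
    _ = ‖A‖ := by rw [hp.1, hp.2.1]; ring

variable [FiniteDimensional ℝ X]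

lemma isCompact_Om : IsCompact (Om X) := by
  apply Metric.isCompact_of_isClosed_isBounded
  · have c1 : IsClosed {p : X × (X →L[ℝ] ℝ) | ‖p.1‖ = 1} :=
      isClosed_eq continuous_fst.norm continuous_const
    have c2 : IsClosed {p : X × (X →L[ℝ] ℝ) | ‖p.2‖ = 1} :=
      isClosed_eq continuous_snd.norm continuous_const
    have c3 : IsClosed {p : X × (X →L[ℝ] ℝ) | p.2 p.1 = 1} :=
      isClosed_eq (continuous_val (ContinuousLinearMap.id ℝ X)) continuous_const
    have : Om X = ({p : X × (X →L[ℝ] ℝ) | ‖p.1‖ = 1} ∩ {p | ‖p.2‖ = 1}) ∩ {p | p.2 p.1 = 1} := by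
      ext p; simp [Om, Set.mem_setOf_eq, and_assoc]
    rw [this]
    exact (c1.inter c2).inter c3
  · apply (Metric.isBounded_closedBall (x := (0 : X × (X →L[ℝ] ℝ))) (r := 1)).subset
    rintro p ⟨h1, h2, -⟩
    simp only [Metric.mem_closedBall, dist_zero_right, Prod.norm_def]
    simp [h1, h2]

lemma om_nonempty (x : X) (hx : x ≠ 0) : (Om X).Nonempty := by
  obtain ⟨g, hg1, hg2⟩ := exists_dual_vector ℝ x (norm_ne_zero_iff.mpr hx)
  refine ⟨(‖x‖⁻¹ • x, g), ?_, hg1, ?_⟩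
  · simp [norm_smul, norm_inv, inv_mul_cancel₀ (norm_ne_zero_iff.mpr hx)]
  · simp only [map_smul, smul_eq_mul, hg2]
    exact inv_mul_cancel₀ (norm_ne_zero_iff.mpr hx)

lemma nrad_isGreatest (S : X →L[ℝ] X) (hne : (Om X).Nonempty) :
    IsGreatest ((fun p : X × (X →L[ℝ] ℝ) => |p.2 (S p.1)|) '' Om X) (nrad S) := by
  obtain ⟨m, hm⟩ := (isCompact_Om.image (continuous_val S).abs).exists_isGreatest (hne.image _)
  rw [nrad_eq, hm.csSup_eq]
  exact hm

lemma val_le_nrad (S : X →L[ℝ] X) (hne : (Om X).Nonempty)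
    {p : X × (X →L[ℝ] ℝ)} (hp : p ∈ Om X) : |p.2 (S p.1)| ≤ nrad S :=
  (nrad_isGreatest S hne).2 ⟨p, hp, rfl⟩

lemma nrad_attained (S : X →L[ℝ] X) (hne : (Om X).Nonempty) :
    ∃ p ∈ Om X, |p.2 (S p.1)| = nrad S := by
  obtain ⟨p, hp, hval⟩ := (nrad_isGreatest S hne).1
  exact ⟨p, hp, hval⟩

lemma nrad_zero_nonpos : nrad (0 : X →L[ℝ] X) ≤ 0 := by
  rw [nrad_eq]
  apply Real.sSup_le
  · rintro r ⟨p, -, rfl⟩; simp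
  · rfl

lemma mem_MW_iff (T : X →L[ℝ] X) (p : X × (X →L[ℝ] ℝ)) :
    p ∈ MW T ↔ p ∈ Om X ∧ |p.2 (T p.1)| = nrad T := by
  simp [MW, Om, Set.mem_setOf_eq, and_assoc]

lemma MW_nonempty (T : X →L[ℝ] X) (hne : (Om X).Nonempty) : (MW T).Nonempty := by
  obtain ⟨p, hp, hv⟩ := nrad_attained T hne
  exact ⟨p, (mem_MW_iff T p).mpr ⟨hp, hv⟩⟩

lemma isCompact_MW (T : X →L[ℝ] X) : IsCompact (MW T) := by
  have : MW T = Om X ∩ {p : X × (X →L[ℝ] ℝ) | |p.2 (T p.1)| = nrad T} := by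
    ext p; rw [mem_MW_iff]; rfl
  rw [this]
  exact isCompact_Om.inter_right (isClosed_eq (continuous_val T).abs continuous_const)

lemma neg_mem_MW {T : X →L[ℝ] X} {p : X × (X →L[ℝ] ℝ)} (hp : p ∈ MW T) : -p ∈ MW T := by
  obtain ⟨h1, h2, h3, h4⟩ := hp
  exact ⟨by simpa using h1, by simpa using h2, by simpa using h3, by simpa using h4⟩

/-- Easy sufficient condition for ν-BJ orthogonality. -/
lemma orth_of_val_zero {T A : X →L[ℝ] X} (hne : (Om X).Nonempty)
    {p : X × (X →L[ℝ] ℝ)} (hp : p ∈ MW T) (h0 : p.2 (A p.1) = 0) :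
    ∀ lam : ℝ, nrad T ≤ nrad (T + lam • A) := by
  intro lam
  obtain ⟨hpOm, hval⟩ := (mem_MW_iff T p).mp hp
  calc nrad T = |p.2 (T p.1)| := hval.symm
    _ = |p.2 ((T + lam • A) p.1)| := by simp [h0]
    _ ≤ nrad (T + lam • A) := val_le_nrad _ hne hpOm

/-- Key compactness lemma: if `f(Tx)·f(Ax) > 0` on all of `MW T`, then the numerical
radius strictly decreases in some direction `lam • A`. -/
lemma not_orth_of_pos {T A : X →L[ℝ] X} (hne : (Om X).Nonempty) (hM : 0 < nrad T)
    (hsign : ∀ p ∈ MW T, 0 < p.2 (T p.1) * p.2 (A p.1)) :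
    ∃ lam : ℝ, nrad (T + lam • A) < nrad T := by
  set M := nrad T with hMdef
  set K := ‖A‖ + 1 with hKdef
  have hK : 0 < K := by positivity
  have hvK : ∀ p ∈ Om X, |p.2 (A p.1)| ≤ K := fun p hp =>
    (val_le_norm A hp).trans (by rw [hKdef]; linarith)
  set C1 : Set (X × (X →L[ℝ] ℝ)) := Om X ∩ {p | p.2 (T p.1) * p.2 (A p.1) ≤ 0} with hC1def
  have hC1cpt : IsCompact C1 :=
    isCompact_Om.inter_right
      (isClosed_le ((continuous_val T).mul (continuous_val A)) continuous_const)
  obtain ⟨M1, hM1lt, hM1le⟩ : ∃ M1, M1 < M ∧ ∀ p ∈ C1, |p.2 (T p.1)| ≤ M1 := by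
    rcases C1.eq_empty_or_nonempty with h | h
    · exact ⟨0, hM, by simp [h]⟩
    · obtain ⟨ps, hps, hmax⟩ :=
        hC1cpt.exists_isMaxOn h ((continuous_val T).abs.continuousOn)
      refine ⟨|ps.2 (T ps.1)|, ?_, fun p hp => hmax hp⟩
      rcases lt_or_eq_of_le (val_le_nrad T hne hps.1) with h' | h'
      · exact h'
      · exfalso
        have hpsMW : ps ∈ MW T := (mem_MW_iff T ps).mpr ⟨hps.1, h'⟩
        exact absurd (hsign ps hpsMW) (not_lt.mpr hps.2)
  set ε := min M (M - M1) with hεdef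
  have hε : 0 < ε := lt_min hM (by linarith)
  have hεM : ε ≤ M := min_le_left _ _
  set lam := -(ε / (2 * K)) with hlamdef
  have hlamneg : lam < 0 := by
    have : 0 < ε / (2 * K) := by positivity
    rw [hlamdef]; linarith
  have hlamabs : |lam| = ε / (2 * K) := by
    rw [hlamdef, abs_neg, abs_of_pos (by positivity)]
  have hbound : ∀ p ∈ Om X, |p.2 ((T + lam • A) p.1)| < M := by
    intro p hp
    have hvaleq : p.2 ((T + lam • A) p.1) = p.2 (T p.1) + lam * p.2 (A p.1) := by simp
    set u := p.2 (T p.1) with hu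
    set v := p.2 (A p.1) with hv
    have huM : |u| ≤ M := val_le_nrad T hne hp
    have hlv : |lam * v| ≤ ε / 2 := by
      rw [abs_mul, hlamabs]
      calc ε / (2 * K) * |v| ≤ ε / (2 * K) * K :=
            mul_le_mul_of_nonneg_left (hvK p hp) (by positivity)
        _ = ε / 2 := by field_simp
    rw [hvaleq]
    by_cases hc : u * v ≤ 0
    · have hpC1 : p ∈ C1 := ⟨hp, hc⟩
      have h1 : |u| ≤ M1 := hM1le p hpC1
      have hεM1 : ε ≤ M - M1 := min_le_right _ _
      calc |u + lam * v| ≤ |u| + |lam * v| := abs_add_le _ _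
        _ ≤ M1 + ε / 2 := add_le_add h1 hlv
        _ < M := by linarith
    · push_neg at hc
      rw [abs_lt]
      rcases mul_pos_iff.mp hc with ⟨hupos, hvpos⟩ | ⟨huneg, hvneg⟩
      · have h1 : lam * v < 0 := mul_neg_of_neg_of_pos hlamneg hvpos
        have h2 : -|lam * v| ≤ lam * v := neg_abs_le _
        have h3 : u ≤ |u| := le_abs_self u
        constructor <;> linarith
      · have h1 : 0 < lam * v := mul_pos_of_neg_of_neg hlamneg hvneg
        have h2 : lam * v ≤ |lam * v| := le_abs_self _
        have h3 : -|u| ≤ u := neg_abs_le u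
        constructor <;> linarith
  obtain ⟨p0, hp0, hv0⟩ := nrad_attained (T + lam • A) hne
  exact ⟨lam, hv0 ▸ hbound p0 hp0⟩

/-- Rank-one evaluation functionals at non-parallel norming pairs are not proportional. -/
lemma indep (p q : X × (X →L[ℝ] ℝ))
    (hp1 : ‖p.1‖ = 1) (hp3 : p.2 p.1 = 1)
    (hq1 : ‖q.1‖ = 1) (hq3 : q.2 q.1 = 1)
    (hqp : q ≠ p) (hqp' : q ≠ -p) (c : ℝ)
    (hc : ∀ S : X →L[ℝ] X, q.2 (S q.1) = c * p.2 (S p.1)) : False := by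
  obtain ⟨x₁, f₁⟩ := p
  obtain ⟨x₂, f₂⟩ := q
  simp only at hp1 hp3 hq1 hq3 hc ⊢
  have key : ∀ (g : X →L[ℝ] ℝ) (y : X), g x₂ * f₂ y = c * (g x₁ * f₁ y) := by
    intro g y
    have := hc (g.smulRight y)
    simpa [ContinuousLinearMap.smulRight_apply, map_smul, smul_eq_mul, mul_comm] using this
  set c' := c * f₁ x₂ with hc'def
  have hgx : ∀ g : X →L[ℝ] ℝ, g x₂ = c' * g x₁ := by
    intro g
    have := key g x₂
    rw [hq3, mul_one] at this
    rw [this, hc'def]; ring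
  have hx : x₂ = c' • x₁ := by
    by_contra h
    have hne0 : x₂ - c' • x₁ ≠ 0 := sub_ne_zero.mpr h
    obtain ⟨g, hg1, hg2⟩ := exists_dual_vector ℝ _ (norm_ne_zero_iff.mpr hne0)
    have : g (x₂ - c' • x₁) = 0 := by
      rw [map_sub, map_smul, smul_eq_mul, hgx g]; ring
    rw [this] at hg2
    exact hne0 (norm_eq_zero.mp (by exact_mod_cast hg2.symm))
  have hc'abs : |c'| = 1 := by
    have : ‖x₂‖ = ‖c' • x₁‖ := by rw [hx]
    rw [norm_smul, hq1, hp1, Real.norm_eq_abs] at this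
    linarith [this]
  have hf1x2 : f₁ x₂ = c' := by rw [hx, map_smul, smul_eq_mul, hp3, mul_one]
  have hfy : ∀ y : X, c' * f₂ y = c * f₁ y := by
    intro y
    have := key f₁ y
    rwa [hp3, one_mul, hf1x2] at this
  have hceq : c = 1 := by
    have h1 : c' * f₂ x₁ = c := by rw [hfy x₁, hp3, mul_one]
    have h2 : f₂ x₂ = c' * f₂ x₁ := by rw [hx, map_smul, smul_eq_mul]
    rw [hq3] at h2
    rw [← h1, ← h2]
  have hf : ∀ y : X, f₂ y = c' * f₁ y := by
    intro y
    have := hfy y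
    rw [hceq, one_mul] at this
    rcases (abs_eq (by norm_num : (0:ℝ) ≤ 1)).mp hc'abs with h | h
    · rw [h, one_mul] at this ⊢; linarith
    · rw [h] at this ⊢; linarith
  rcases (abs_eq (by norm_num : (0:ℝ) ≤ 1)).mp hc'abs with h | h
  · apply hqp
    rw [h, one_smul] at hx
    have : f₂ = f₁ := ContinuousLinearMap.ext fun y => by rw [hf y, h, one_mul]
    simp [Prod.ext_iff, hx, this]
  · apply hqp'
    rw [h] at hx
    have : f₂ = -f₁ := ContinuousLinearMap.ext fun y => by rw [hf y, h]; simp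
    simp [Prod.ext_iff, this]
    rw [hx]; simp

/-- From non-parallelism, get an operator in one kernel but not the other. -/
lemma exists_kernel (p q : X × (X →L[ℝ] ℝ))
    (hp1 : ‖p.1‖ = 1) (hp3 : p.2 p.1 = 1)
    (hq1 : ‖q.1‖ = 1) (hq3 : q.2 q.1 = 1)
    (hqp : q ≠ p) (hqp' : q ≠ -p) :
    ∃ u : X →L[ℝ] X, q.2 (u q.1) = 0 ∧ p.2 (u p.1) ≠ 0 := by
  by_contra h
  push_neg at h
  set W : X →L[ℝ] X := q.2.smulRight q.1 with hWdef
  have hWq : q.2 (W q.1) = 1 := by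
    simp [hWdef, ContinuousLinearMap.smulRight_apply, map_smul, smul_eq_mul, hq3]
  have hpq : ∀ S : X →L[ℝ] X, p.2 (S p.1) = p.2 (W p.1) * q.2 (S q.1) := by
    intro S
    have hker : q.2 ((S - q.2 (S q.1) • W) q.1) = 0 := by
      simp [map_smul, smul_eq_mul, hWq]
    have := h _ hker
    simp only [ContinuousLinearMap.sub_apply, ContinuousLinearMap.smul_apply, map_sub,
      map_smul, smul_eq_mul] at this
    have h2 : p.2 (S p.1) - q.2 (S q.1) * p.2 (W p.1) = 0 := by simpa using this
    linarith [h2]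
  have hpnq : p ≠ -q := by
    intro hh
    apply hqp'
    rw [hh]; simp
  exact indep q p hq1 hq3 hp1 hp3 hqp.symm hpnq (p.2 (W p.1)) hpq

end NuSmoothAux

open NuSmoothAux in
/-- on a finite-dimensional real Banach space (on which the numerical radius
is a norm), a nonzero `T` is nu-smooth iff `M_{W(T)} = {(x₀, x₀*), (−x₀, −x₀*)}` for some
fixed pair `(x₀, x₀*)` with `x₀*(x₀) = 1 = ‖x₀‖ = ‖x₀*‖`. -/
theorem nu_smooth_iff_real (X : Type*) [NormedAddCommGroup X] [NormedSpace ℝ X]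
    [FiniteDimensional ℝ X]
    (hnorm : ∀ S : X →L[ℝ] X, nrad S = 0 → S = 0)
    (T : X →L[ℝ] X) (hT : T ≠ 0) :
    (∀ A B : X →L[ℝ] X, (∀ lam : ℝ, nrad T ≤ nrad (T + lam • A)) →
      (∀ lam : ℝ, nrad T ≤ nrad (T + lam • B)) →
      (∀ lam : ℝ, nrad T ≤ nrad (T + lam • (A + B)))) ↔
    (∃ (x₀ : X) (f₀ : X →L[ℝ] ℝ), ‖x₀‖ = 1 ∧ ‖f₀‖ = 1 ∧ f₀ x₀ = 1 ∧
      MW T = {(x₀, f₀), (-x₀, -f₀)}) := by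
  classical
  have hxex : ∃ x : X, T x ≠ 0 := by
    by_contra h
    push_neg at h
    exact hT (ContinuousLinearMap.ext fun x => by simp [h x])
  obtain ⟨xs, hxs⟩ := hxex
  have hxne : xs ≠ 0 := fun h => hxs (by simp [h])
  have hne : (Om X).Nonempty := om_nonempty xs hxne
  have hM0 : 0 ≤ nrad T := by
    obtain ⟨p, hp⟩ := hne
    exact le_trans (abs_nonneg _) (val_le_nrad T ⟨p, hp⟩ hp)
  have hM : 0 < nrad T := lt_of_le_of_ne hM0 fun h => hT (hnorm T h.symm)
  constructor
  · -- right additivity ⇒ two-point attainment set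
    intro Hra
    obtain ⟨p, hpMW⟩ := MW_nonempty T hne
    obtain ⟨hp1, hp2, hp3, hp4⟩ := hpMW
    have hpMW : p ∈ MW T := ⟨hp1, hp2, hp3, hp4⟩
    refine ⟨p.1, p.2, hp1, hp2, hp3, ?_⟩
    have hsup : {((p.1 : X), (p.2 : X →L[ℝ] ℝ)), (-p.1, -p.2)} ⊆ MW T := by
      intro r hr
      simp only [Set.mem_insert_iff, Set.mem_singleton_iff] at hr
      rcases hr with rfl | rfl
      · simpa using hpMW
      · have he : ((-p.1, -p.2) : X × (X →L[ℝ] ℝ)) = -p := by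
          ext <;> simp
        rw [he]
        exact neg_mem_MW hpMW
    by_contra hne2
    have hnsub : ¬ MW T ⊆ {((p.1 : X), (p.2 : X →L[ℝ] ℝ)), (-p.1, -p.2)} :=
      fun hsub => hne2 (hsub.antisymm hsup)
    obtain ⟨q, hqMW, hqpair⟩ := Set.not_subset.mp hnsub
    simp only [Set.mem_insert_iff, Set.mem_singleton_iff, not_or] at hqpair
    obtain ⟨hqne1, hqne2⟩ := hqpair
    have hqp : q ≠ p := by intro h; exact hqne1 (by rw [h])
    have hqp' : q ≠ -p := by
      intro h
      apply hqne2
      rw [h]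
      ext <;> simp
    obtain ⟨hq1, hq2, hq3, hq4⟩ := hqMW
    have hqMW : q ∈ MW T := ⟨hq1, hq2, hq3, hq4⟩
    obtain ⟨u, hu0, hu1⟩ := exists_kernel p q hp1 hp3 hq1 hq3 hqp hqp'
    obtain ⟨u', hu'0, hu'1⟩ := exists_kernel q p hq1 hq3 hp1 hp3 hqp.symm
      (fun h => hqp' (by rw [h]; simp))
    have hsPne : p.2 (T p.1) ≠ 0 := by
      intro h
      rw [h] at hp4
      simp at hp4
      linarith [hM]
    have hsQne : q.2 (T q.1) ≠ 0 := by
      intro h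
      rw [h] at hq4
      simp at hq4
      linarith [hM]
    set sP := p.2 (T p.1) with hsPdef
    set sQ := q.2 (T q.1) with hsQdef
    set z : X →L[ℝ] X := (sP * p.2 (u p.1)) • u - (sQ * q.2 (u' q.1)) • u' with hzdef
    have hzval : ∀ r : X × (X →L[ℝ] ℝ),
        r.2 (z r.1) = (sP * p.2 (u p.1)) * r.2 (u r.1) - (sQ * q.2 (u' q.1)) * r.2 (u' r.1) := by
      intro r
      simp [hzdef, map_sub, map_smul, smul_eq_mul]
    have hzp : 0 < sP * p.2 (z p.1) := by
      rw [hzval p, hu'0]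
      have : sP * ((sP * p.2 (u p.1)) * p.2 (u p.1) - (sQ * q.2 (u' q.1)) * 0)
          = (sP * p.2 (u p.1))^2 := by ring
      rw [this]
      exact lt_of_le_of_ne (sq_nonneg _) (Ne.symm (pow_ne_zero 2 (mul_ne_zero hsPne hu1)))
    have hzq : sQ * q.2 (z q.1) < 0 := by
      rw [hzval q, hu0]
      have : sQ * ((sP * p.2 (u p.1)) * 0 - (sQ * q.2 (u' q.1)) * q.2 (u' q.1))
          = -((sQ * q.2 (u' q.1))^2) := by ring
      rw [this]
      have h2 : (0:ℝ) < (sQ * q.2 (u' q.1))^2 :=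
        lt_of_le_of_ne (sq_nonneg _) (Ne.symm (pow_ne_zero 2 (mul_ne_zero hsQne hu'1)))
      linarith
    -- minimize and maximize r ↦ r.2 (T r.1) * r.2 (z r.1) over MW T
    have hcont : Continuous fun r : X × (X →L[ℝ] ℝ) => r.2 (T r.1) * r.2 (z r.1) :=
      (continuous_val T).mul (continuous_val z)
    have hMWne : (MW T).Nonempty := ⟨p, hpMW⟩
    obtain ⟨r₁, hr₁, hmin⟩ := (isCompact_MW T).exists_isMinOn hMWne hcont.continuousOn
    obtain ⟨r₂, hr₂, hmax⟩ := (isCompact_MW T).exists_isMaxOn hMWne hcont.continuousOn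
    set α := r₁.2 (T r₁.1) * r₁.2 (z r₁.1) with hαdef
    set β := r₂.2 (T r₂.1) * r₂.2 (z r₂.1) with hβdef
    have hαneg : α < 0 := lt_of_le_of_lt (hmin hqMW) hzq
    have hβpos : 0 < β := lt_of_lt_of_le hzp (hmax hpMW)
    set M2 := nrad T ^ 2 with hM2def
    have hM2 : 0 < M2 := by positivity
    have hsq : ∀ r, r ∈ MW T → r.2 (T r.1) ^ 2 = M2 := by
      intro r hr
      rw [hM2def, ← sq_abs, hr.2.2.2]
    have hsne : ∀ r, r ∈ MW T → r.2 (T r.1) ≠ 0 := by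
      intro r hr h0
      have := hr.2.2.2
      rw [h0] at this
      simp at this
      linarith [hM]
    set A := z - (α / M2) • T with hAdef
    set B := (β / M2) • T - z with hBdef
    have hA0 : r₁.2 (A r₁.1) = 0 := by
      have h1 : r₁.2 (A r₁.1) = r₁.2 (z r₁.1) - (α / M2) * r₁.2 (T r₁.1) := by
        simp [hAdef, map_sub, map_smul, smul_eq_mul]
      have h2 : r₁.2 (T r₁.1) * r₁.2 (A r₁.1)
          = α - (α / M2) * r₁.2 (T r₁.1) ^ 2 := by
        rw [h1, hαdef]; ring
      rw [hsq r₁ hr₁, div_mul_cancel₀ _ (ne_of_gt hM2)] at h2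
      have h3 : r₁.2 (T r₁.1) * r₁.2 (A r₁.1) = 0 := by rw [h2]; ring
      exact (mul_eq_zero.mp h3).resolve_left (hsne r₁ hr₁)
    have hB0 : r₂.2 (B r₂.1) = 0 := by
      have h1 : r₂.2 (B r₂.1) = (β / M2) * r₂.2 (T r₂.1) - r₂.2 (z r₂.1) := by
        simp [hBdef, map_sub, map_smul, smul_eq_mul]
      have h2 : r₂.2 (T r₂.1) * r₂.2 (B r₂.1)
          = (β / M2) * r₂.2 (T r₂.1) ^ 2 - β := by
        rw [h1, hβdef]; ring
      rw [hsq r₂ hr₂, div_mul_cancel₀ _ (ne_of_gt hM2)] at h2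
      have h3 : r₂.2 (T r₂.1) * r₂.2 (B r₂.1) = 0 := by rw [h2]; ring
      exact (mul_eq_zero.mp h3).resolve_left (hsne r₂ hr₂)
    have OrthA := orth_of_val_zero hne hr₁ hA0
    have OrthB := orth_of_val_zero hne hr₂ hB0
    have hAB : A + B = ((β - α) / M2) • T := by
      rw [hAdef, hBdef, sub_div, sub_smul]
      abel
    have hccpos : 0 < (β - α) / M2 := div_pos (by linarith) hM2
    have key := Hra A B OrthA OrthB (-(1 / ((β - α) / M2)))
    rw [hAB, smul_smul] at key
    have hgen : ∀ c : ℝ, c ≠ 0 → -(1 / c) * c = -1 := fun c hc => by field_simp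
    rw [hgen _ (ne_of_gt hccpos), neg_one_smul] at key
    have hzero : T + -T = 0 := by abel
    rw [hzero] at key
    have := nrad_zero_nonpos (X := X)
    linarith [key, this, hM]
  · -- two-point attainment set ⇒ right additivity
    rintro ⟨x₀, f₀, h1, h2, h3, hMWeq⟩
    intro A B hA hB
    have hp₀MW : ((x₀, f₀) : X × (X →L[ℝ] ℝ)) ∈ MW T := by
      rw [hMWeq]; exact Set.mem_insert _ _
    have hs₀ : |f₀ (T x₀)| = nrad T := hp₀MW.2.2.2
    have hs₀ne : f₀ (T x₀) ≠ 0 := by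
      intro h
      rw [h] at hs₀
      simp at hs₀
      linarith [hM]
    have key : ∀ C : X →L[ℝ] X, (∀ l : ℝ, nrad T ≤ nrad (T + l • C)) → f₀ (C x₀) = 0 := by
      intro C hC
      by_contra hc0
      set σ : ℝ := if 0 < f₀ (T x₀) * f₀ (C x₀) then 1 else -1 with hσdef
      have hprodne : f₀ (T x₀) * f₀ (C x₀) ≠ 0 := mul_ne_zero hs₀ne hc0
      have hσpos : 0 < σ * (f₀ (T x₀) * f₀ (C x₀)) := by
        rw [hσdef]
        split_ifs with hcase
        · rw [one_mul]; exact hcase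
        · have : f₀ (T x₀) * f₀ (C x₀) < 0 :=
            lt_of_le_of_ne (not_lt.mp hcase) hprodne
          nlinarith
      have hsign : ∀ r ∈ MW T, 0 < r.2 (T r.1) * r.2 ((σ • C) r.1) := by
        intro r hr
        rw [hMWeq] at hr
        simp only [Set.mem_insert_iff, Set.mem_singleton_iff] at hr
        rcases hr with rfl | rfl
        · simpa [map_smul, smul_eq_mul, mul_assoc, mul_left_comm] using hσpos
        · simpa [map_smul, smul_eq_mul, mul_assoc, mul_left_comm] using hσpos
      obtain ⟨lam', hlam'⟩ := not_orth_of_pos hne hM hsign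
      rw [smul_smul] at hlam'
      exact absurd (hC (lam' * σ)) (not_le.mpr hlam')
    have hAB0 : f₀ ((A + B) x₀) = 0 := by
      have hA' := key A hA
      have hB' := key B hB
      simp only [ContinuousLinearMap.add_apply, map_add, hA', hB', add_zero]
    exact orth_of_val_zero hne hp₀MW hAB0
end

section
/- Let X be the two-dimensional real space with regular hexagonal unit ball (vertices x₁=(1,0), x₂=(1/2,√3/2), x₃=(−1/2,√3/2) and their negatives). Define T(x,y) = x·u with u = (0,√3/2). Then ‖T‖_w = 1/2, and both (x₁, f₁) and (x₁, f₂) belong to M_{W(T)}, where f₁(x,y) = x − y/√3 and f₂(x,y) = x + y/√3; hence T is not nu-smooth. -/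
/-- The regular hexagon norm on `ℝ²`:
`‖(x,y)‖ = (√3|y| + |x| + ||y|/√3 − |x||)/2`. -/
noncomputable def hexNorm (x y : ℝ) : ℝ :=
  (Real.sqrt 3 * |y| + |x| + |(|y| / Real.sqrt 3 - |x|)|) / 2

lemma s3_pos : (0:ℝ) < Real.sqrt 3 := by positivity
lemma s3_sq : Real.sqrt 3 * Real.sqrt 3 = 3 := Real.mul_self_sqrt (by norm_num)

lemma hexNorm_lower1 (p q : ℝ) : |p| + |q| / Real.sqrt 3 ≤ hexNorm p q := by
  have hs := s3_pos; have hs2 := s3_sq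
  unfold hexNorm
  have h1 : |p| - |q| / Real.sqrt 3 ≤ |(|q| / Real.sqrt 3 - |p|)| := by
    rw [abs_sub_comm]; exact le_abs_self _
  have h2 : |q| / Real.sqrt 3 * Real.sqrt 3 = |q| := div_mul_cancel₀ _ hs.ne'
  nlinarith [abs_nonneg p, abs_nonneg q]

lemma hexNorm_lower2 (p q : ℝ) : 2 * |q| / Real.sqrt 3 ≤ hexNorm p q := by
  have hs := s3_pos; have hs2 := s3_sq
  unfold hexNorm
  have h1 : |q| / Real.sqrt 3 - |p| ≤ |(|q| / Real.sqrt 3 - |p|)| := le_abs_self _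
  have h2 : |q| / Real.sqrt 3 * Real.sqrt 3 = |q| := div_mul_cancel₀ _ hs.ne'
  have h3 : 2 * |q| / Real.sqrt 3 * Real.sqrt 3 = 2 * |q| := div_mul_cancel₀ _ hs.ne'
  rw [le_div_iff₀ (by norm_num : (0:ℝ) < 2)]
  have h4 := mul_le_mul_of_nonneg_left h1 hs.le
  nlinarith [abs_nonneg p, abs_nonneg q, abs_nonneg (|q| / Real.sqrt 3 - |p|)]

lemma hexNorm_10 : hexNorm 1 0 = 1 := by
  have hs := s3_pos
  simp [hexNorm]

lemma hexNorm_half (c : ℝ) (hc : |c| = 1/2) : hexNorm c (Real.sqrt 3 / 2) = 1 := by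
  have hs := s3_pos; have hs2 := s3_sq
  have h1 : |Real.sqrt 3 / 2| = Real.sqrt 3 / 2 := abs_of_pos (by positivity)
  have h2 : Real.sqrt 3 / 2 / Real.sqrt 3 = 1/2 := by field_simp
  rw [hexNorm, h1, hc, h2, sub_self, abs_zero]
  nlinarith

set_option maxHeartbeats 1000000 in
lemma key_ineq (p q a b : ℝ)
    (h1 : |p| + |q| / Real.sqrt 3 ≤ 1) (h2 : |q| ≤ Real.sqrt 3 / 2)
    (h3 : |(1/2) * a + (Real.sqrt 3 / 2) * b| ≤ 1)
    (h4 : |(-(1/2)) * a + (Real.sqrt 3 / 2) * b| ≤ 1)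
    (h5 : p * a + q * b = 1) : |p * b| ≤ 1 / Real.sqrt 3 := by
  have hs := s3_pos; have hs2 := s3_sq
  have h3' := abs_le.mp h3; have h4' := abs_le.mp h4
  have hAB : |a| + Real.sqrt 3 * |b| ≤ 2 := by
    rcases abs_cases a with ⟨ha,_⟩|⟨ha,_⟩ <;> rcases abs_cases b with ⟨hb,_⟩|⟨hb,_⟩ <;>
      rw [ha, hb] <;> nlinarith [h3'.1, h3'.2, h4'.1, h4'.2]
  have hqq : |q| / Real.sqrt 3 * Real.sqrt 3 = |q| := div_mul_cancel₀ _ hs.ne'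
  have h1' : Real.sqrt 3 * |p| + |q| ≤ Real.sqrt 3 := by
    nlinarith [mul_le_mul_of_nonneg_left h1 hs.le]
  have hcore : 1 ≤ |a| * |p| + |b| * |q| := by
    calc (1:ℝ) = p * a + q * b := h5.symm
    _ ≤ |p * a + q * b| := le_abs_self _
    _ ≤ |p * a| + |q * b| := abs_add_le _ _
    _ = |a| * |p| + |b| * |q| := by rw [abs_mul, abs_mul]; ring
  rw [abs_mul, le_div_iff₀ hs]
  have hP1 : |p| ≤ 1 := by
    have := abs_nonneg q
    nlinarith [div_nonneg (abs_nonneg q) hs.le]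
  rcases le_or_gt (|p|) (1/2) with hP | hP
  · have hB : Real.sqrt 3 * |b| ≤ 2 := by linarith [abs_nonneg a]
    nlinarith [mul_nonneg (sub_nonneg.mpr hP) (sub_nonneg.mpr hB),
      abs_nonneg p, abs_nonneg b]
  · have ha2 : |a| ≤ 2 - Real.sqrt 3 * |b| := by linarith
    have t1 : |a| * |p| ≤ (2 - Real.sqrt 3 * |b|) * |p| :=
      mul_le_mul_of_nonneg_right ha2 (abs_nonneg p)
    have hq2 : |q| ≤ Real.sqrt 3 * (1 - |p|) := by nlinarith
    have t2 : |b| * |q| ≤ |b| * (Real.sqrt 3 * (1 - |p|)) :=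
      mul_le_mul_of_nonneg_left hq2 (abs_nonneg b)
    have hx : (Real.sqrt 3 * |b|) * (2 * |p| - 1) ≤ 2 * |p| - 1 := by
      linarith [t1, t2, hcore]
    have hx1 : Real.sqrt 3 * |b| ≤ 1 := by
      by_contra hcon
      push_neg at hcon
      nlinarith [mul_pos (sub_pos.mpr hcon) (by linarith : (0:ℝ) < 2 * |p| - 1)]
    have hfin : |p| * (Real.sqrt 3 * |b|) ≤ 1 * 1 :=
      mul_le_mul hP1 hx1 (by positivity) (by norm_num)
    linarith [hfin]

lemma nrad_bdd {X : Type*} [NormedAddCommGroup X] [NormedSpace ℝ X] (S : X →L[ℝ] X) :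
    BddAbove {r : ℝ | ∃ (x : X) (f : X →L[ℝ] ℝ), ‖x‖ = 1 ∧ ‖f‖ = 1 ∧ f x = 1 ∧ r = ‖f (S x)‖} := by
  refine ⟨‖S‖, ?_⟩
  rintro r ⟨x, f, hx, hf, -, rfl⟩
  calc ‖f (S x)‖ ≤ ‖f‖ * ‖S x‖ := f.le_opNorm _
  _ = ‖S x‖ := by rw [hf, one_mul]
  _ ≤ ‖S‖ * ‖x‖ := S.le_opNorm x
  _ = ‖S‖ := by rw [hx, mul_one]

/-- on the two-dimensional real space with regular hexagonal unit ball,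
for `T(x,y) = x • u` with `u = (0, √3/2)`, one has `‖T‖_w = 1/2`, both `(x₁, f₁)` and
`(x₁, f₂)` belong to `M_{W(T)}` where `x₁ = (1,0)`, `f₁(x,y) = x − y/√3`,
`f₂(x,y) = x + y/√3`; hence `T` is not nu-smooth. -/
theorem hexagon_not_nu_smooth_example (X : Type*) [NormedAddCommGroup X] [NormedSpace ℝ X]
    (e : X ≃ₗ[ℝ] ℝ × ℝ)
    (hnorm : ∀ v : X, ‖v‖ = hexNorm (e v).1 (e v).2)
    (u : X) (hu : e u = (0, Real.sqrt 3 / 2))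
    (T : X →L[ℝ] X) (hT : ∀ v : X, T v = (e v).1 • u)
    (f₁ f₂ : X →L[ℝ] ℝ)
    (hf₁ : ∀ v : X, f₁ v = (e v).1 - (e v).2 / Real.sqrt 3)
    (hf₂ : ∀ v : X, f₂ v = (e v).1 + (e v).2 / Real.sqrt 3) :
    nrad T = 1 / 2 ∧
    (e.symm (1, 0), f₁) ∈ MW T ∧ (e.symm (1, 0), f₂) ∈ MW T ∧
    ¬ (∀ A B : X →L[ℝ] X, (∀ lam : ℝ, nrad T ≤ nrad (T + lam • A)) →
        (∀ lam : ℝ, nrad T ≤ nrad (T + lam • B)) →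
        (∀ lam : ℝ, nrad T ≤ nrad (T + lam • (A + B)))) := by
  have hs := s3_pos; have hs2 := s3_sq
  set x₁ : X := e.symm (1, 0) with hx₁def
  have hex₁ : e x₁ = (1, 0) := e.apply_symm_apply _
  have hx₁n : ‖x₁‖ = 1 := by rw [hnorm, hex₁]; exact hexNorm_10
  have hf₁x₁ : f₁ x₁ = 1 := by rw [hf₁, hex₁]; simp
  have hf₂x₁ : f₂ x₁ = 1 := by rw [hf₂, hex₁]; simp
  have hf₁n : ‖f₁‖ = 1 := by
    refine le_antisymm (f₁.opNorm_le_bound zero_le_one fun v => ?_) ?_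
    · rw [hf₁ v, hnorm v, one_mul, Real.norm_eq_abs]
      calc |(e v).1 - (e v).2 / Real.sqrt 3|
          ≤ |(e v).1| + |(e v).2 / Real.sqrt 3| := abs_sub _ _
      _ = |(e v).1| + |(e v).2| / Real.sqrt 3 := by rw [abs_div, abs_of_pos hs]
      _ ≤ hexNorm (e v).1 (e v).2 := hexNorm_lower1 _ _
    · have h := f₁.le_opNorm x₁
      rw [hf₁x₁, hx₁n, mul_one, Real.norm_eq_abs] at h
      simpa using h
  have hf₂n : ‖f₂‖ = 1 := by
    refine le_antisymm (f₂.opNorm_le_bound zero_le_one fun v => ?_) ?_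
    · rw [hf₂ v, hnorm v, one_mul, Real.norm_eq_abs]
      calc |(e v).1 + (e v).2 / Real.sqrt 3|
          ≤ |(e v).1| + |(e v).2 / Real.sqrt 3| := abs_add_le _ _
      _ = |(e v).1| + |(e v).2| / Real.sqrt 3 := by rw [abs_div, abs_of_pos hs]
      _ ≤ hexNorm (e v).1 (e v).2 := hexNorm_lower1 _ _
    · have h := f₂.le_opNorm x₁
      rw [hf₂x₁, hx₁n, mul_one, Real.norm_eq_abs] at h
      simpa using h
  have hTx₁ : T x₁ = u := by rw [hT, hex₁]; simp
  have habsh : |(1/2 : ℝ)| = 1/2 := abs_of_pos (by norm_num)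
  have habsnh : |(-(1/2) : ℝ)| = 1/2 := by rw [abs_neg]; exact habsh
  have hf₁u : f₁ u = -(1/2) := by
    rw [hf₁, hu]
    field_simp
    ring
  have hf₂u : f₂ u = 1/2 := by
    rw [hf₂, hu]
    field_simp
    ring
  -- decomposition of functionals
  have hdecomp : ∀ v : X, v = (e v).1 • e.symm (1, 0) + (e v).2 • e.symm (0, 1) := by
    intro v
    apply e.injective
    simp [Prod.ext_iff]
  -- nrad T = 1/2
  have hmem : (1/2 : ℝ) ∈ {r : ℝ | ∃ (x : X) (f : X →L[ℝ] ℝ),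
      ‖x‖ = 1 ∧ ‖f‖ = 1 ∧ f x = 1 ∧ r = ‖f (T x)‖} :=
    ⟨x₁, f₁, hx₁n, hf₁n, hf₁x₁, by rw [hTx₁, hf₁u, Real.norm_eq_abs, habsnh]⟩
  have hnr : nrad T = 1 / 2 := by
    refine le_antisymm (Real.sSup_le ?_ (by norm_num)) (le_csSup (nrad_bdd T) hmem)
    rintro r ⟨x, f, hx, hf, hfx, rfl⟩
    set a : ℝ := f (e.symm (1, 0)) with hadef
    set b : ℝ := f (e.symm (0, 1)) with hbdef
    have hfv : ∀ v : X, f v = (e v).1 * a + (e v).2 * b := by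
      intro v
      conv_lhs => rw [hdecomp v]
      rw [map_add, map_smul, map_smul, smul_eq_mul, smul_eq_mul]
    have hbd : ∀ st : ℝ × ℝ, |st.1 * a + st.2 * b| ≤ hexNorm st.1 st.2 := by
      intro st
      have h := f.le_opNorm (e.symm st)
      rw [hf, one_mul, hnorm, e.apply_symm_apply, Real.norm_eq_abs, hfv,
        e.apply_symm_apply] at h
      exact h
    have hexx : hexNorm (e x).1 (e x).2 = 1 := by rw [← hnorm, hx]
    have h1 : |(e x).1| + |(e x).2| / Real.sqrt 3 ≤ 1 :=
      hexx ▸ hexNorm_lower1 (e x).1 (e x).2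
    have h2 : |(e x).2| ≤ Real.sqrt 3 / 2 := by
      have := hexx ▸ hexNorm_lower2 (e x).1 (e x).2
      rw [div_le_iff₀ hs] at this
      linarith
    have h3 : |(1/2) * a + (Real.sqrt 3 / 2) * b| ≤ 1 := by
      have := hbd (1/2, Real.sqrt 3 / 2)
      rwa [hexNorm_half _ (by norm_num)] at this
    have h4 : |(-(1/2)) * a + (Real.sqrt 3 / 2) * b| ≤ 1 := by
      have := hbd (-(1/2), Real.sqrt 3 / 2)
      rwa [hexNorm_half _ (by rw [abs_neg]; norm_num)] at this
    have h5 : (e x).1 * a + (e x).2 * b = 1 := by rw [← hfv, hfx]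
    have k := key_ineq (e x).1 (e x).2 a b h1 h2 h3 h4 h5
    have hfu : f u = Real.sqrt 3 / 2 * b := by
      rw [hfv u, hu]; simp
    rw [hT, map_smul, smul_eq_mul, hfu, Real.norm_eq_abs]
    have : (e x).1 * (Real.sqrt 3 / 2 * b) = ((e x).1 * b) * (Real.sqrt 3 / 2) := by ring
    rw [this, abs_mul, abs_of_pos (by positivity : (0:ℝ) < Real.sqrt 3 / 2)]
    have := mul_le_mul_of_nonneg_right k (by positivity : (0:ℝ) ≤ Real.sqrt 3 / 2)
    calc |(e x).1 * b| * (Real.sqrt 3 / 2)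
        ≤ 1 / Real.sqrt 3 * (Real.sqrt 3 / 2) := this
    _ = 1 / 2 := by field_simp
  refine ⟨hnr, ⟨hx₁n, hf₁n, hf₁x₁, ?_⟩, ⟨hx₁n, hf₂n, hf₂x₁, ?_⟩, ?_⟩
  · show |f₁ (T x₁)| = nrad T
    rw [hTx₁, hf₁u, hnr, habsnh]
  · show |f₂ (T x₁)| = nrad T
    rw [hTx₁, hf₂u, hnr, habsh]
  · -- non nu-smoothness
    intro hadd
    letI : FiniteDimensional ℝ X := e.symm.finiteDimensional
    let mk : (ℝ × ℝ) → (X →L[ℝ] X) := fun w =>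
      LinearMap.toContinuousLinearMap
        { toFun := fun v => (e v).1 • e.symm w
          map_add' := fun x y => by simp [add_smul]
          map_smul' := fun c x => by simp [smul_smul]}
    set w₁ : ℝ × ℝ := (1/2, Real.sqrt 3 / 2) with hw₁
    set w₂ : ℝ × ℝ := (-(1/2), Real.sqrt 3 / 2) with hw₂
    set A : X →L[ℝ] X := mk w₁ with hA
    set B : X →L[ℝ] X := mk w₂ with hB
    have hAv : ∀ v : X, A v = (e v).1 • e.symm w₁ := fun v => rfl
    have hBv : ∀ v : X, B v = (e v).1 • e.symm w₂ := fun v => rfl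
    have hf₁w₁ : f₁ (e.symm w₁) = 0 := by
      rw [hf₁, e.apply_symm_apply, hw₁]
      field_simp
      ring
    have hf₂w₂ : f₂ (e.symm w₂) = 0 := by
      rw [hf₂, e.apply_symm_apply, hw₂]
      field_simp
      ring
    have horthA : ∀ lam : ℝ, nrad T ≤ nrad (T + lam • A) := by
      intro lam
      rw [hnr]
      refine le_csSup (nrad_bdd _) ⟨x₁, f₁, hx₁n, hf₁n, hf₁x₁, ?_⟩
      have : (T + lam • A) x₁ = u + lam • e.symm w₁ := by
        rw [ContinuousLinearMap.add_apply, ContinuousLinearMap.smul_apply, hTx₁, hAv,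
          hex₁]
        simp
      rw [this, map_add, map_smul, hf₁u, hf₁w₁, smul_eq_mul, mul_zero, add_zero,
        Real.norm_eq_abs, habsnh]
    have horthB : ∀ lam : ℝ, nrad T ≤ nrad (T + lam • B) := by
      intro lam
      rw [hnr]
      refine le_csSup (nrad_bdd _) ⟨x₁, f₂, hx₁n, hf₂n, hf₂x₁, ?_⟩
      have : (T + lam • B) x₁ = u + lam • e.symm w₂ := by
        rw [ContinuousLinearMap.add_apply, ContinuousLinearMap.smul_apply, hTx₁, hBv,
          hex₁]
        simp
      rw [this, map_add, map_smul, hf₂u, hf₂w₂, smul_eq_mul, mul_zero, add_zero,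
        Real.norm_eq_abs, habsh]
    have hkey : u + (-(1/2) : ℝ) • (e.symm w₁ + e.symm w₂) = 0 := by
      apply e.injective
      rw [map_zero, map_add, map_smul, map_add, e.apply_symm_apply, e.apply_symm_apply,
        hu, hw₁, hw₂]
      rw [Prod.ext_iff]
      constructor <;> simp <;> ring
    have hzero : ∀ x : X, (T + (-(1/2) : ℝ) • (A + B)) x = 0 := by
      intro x
      rw [ContinuousLinearMap.add_apply, ContinuousLinearMap.smul_apply,
        ContinuousLinearMap.add_apply, hT, hAv, hBv, ← smul_add,
        smul_comm ((-(1/2)) : ℝ) ((e x).1), ← smul_add, hkey, smul_zero]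
    have hle : nrad (T + (-(1/2) : ℝ) • (A + B)) ≤ 0 := by
      apply Real.sSup_le _ le_rfl
      rintro r ⟨x, f, hx, hf, -, rfl⟩
      rw [hzero x, map_zero, norm_zero]
    have := hadd A B horthA horthB (-(1/2))
    rw [hnr] at this
    linarith
end
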